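/- Let n, f, r be nonnegative integers with n ≥ 2f + 3r and n > f. Let μ ≥ γ > 0. Then ((n-f)γ - 2(f+r)μ)² ≤ ((n-f)² + 4(f+r)²)·μ², and consequently 1 - ((n-f)γ - 2(f+r)μ)²/((n-f)²μ² + 2(n-r)²μ²) ≥ 2(n + √2·f + (√2-1)·r)(n - √2·f - (1+√2)·r) / ((n-f)² + 2(n-r)²) > 0. -/

import Mathlib

set_option maxHeartbeats 800000


/-- Algebraic inequality for the stochastic CGE convergence rate: with
`n ≥ 2f + 3r`, `n > f`, and `0 < γ ≤ μ`, the squared margin is bounded and the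
rate parameter is bounded below away from the degenerate regime. -/
theorem stmt14 (n f r : ℕ) (hn : 2 * f + 3 * r ≤ n) (hnf : f < n)
    (μ γ : ℝ) (hγ : 0 < γ) (hγμ : γ ≤ μ) :
    (((n : ℝ) - f) * γ - 2 * ((f : ℝ) + r) * μ) ^ 2 ≤
      (((n : ℝ) - f) ^ 2 + 4 * ((f : ℝ) + r) ^ 2) * μ ^ 2 ∧
    1 - (((n : ℝ) - f) * γ - 2 * ((f : ℝ) + r) * μ) ^ 2 /
        (((n : ℝ) - f) ^ 2 * μ ^ 2 + 2 * ((n : ℝ) - r) ^ 2 * μ ^ 2) ≥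
      2 * ((n : ℝ) + Real.sqrt 2 * f + (Real.sqrt 2 - 1) * r) *
        ((n : ℝ) - Real.sqrt 2 * f - (1 + Real.sqrt 2) * r) /
        (((n : ℝ) - f) ^ 2 + 2 * ((n : ℝ) - r) ^ 2) ∧
    0 < 2 * ((n : ℝ) + Real.sqrt 2 * f + (Real.sqrt 2 - 1) * r) *
        ((n : ℝ) - Real.sqrt 2 * f - (1 + Real.sqrt 2) * r) /
        (((n : ℝ) - f) ^ 2 + 2 * ((n : ℝ) - r) ^ 2) := by
  set s := Real.sqrt 2 with hs
  have hs2 : s ^ 2 = 2 := Real.sq_sqrt (by norm_num)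
  have hs1 : 1 ≤ s := by
    rw [hs]; nlinarith [Real.sqrt_nonneg 2, Real.sq_sqrt (show (0:ℝ) ≤ 2 by norm_num)]
  have hs15 : s ≤ 1.5 := by
    nlinarith [Real.sqrt_nonneg 2]
  have hn' : 2 * (f : ℝ) + 3 * r ≤ n := by exact_mod_cast hn
  have hnf' : (f : ℝ) < n := by exact_mod_cast hnf
  have hf0 : (0:ℝ) ≤ f := Nat.cast_nonneg f
  have hr0 : (0:ℝ) ≤ r := Nat.cast_nonneg r
  have hμ : 0 < μ := lt_of_lt_of_le hγ hγμ
  have hnr : (0:ℝ) < (n : ℝ) - r := by nlinarith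
  have ha : (0:ℝ) < (n : ℝ) - f := by linarith
  have hD : (0:ℝ) < ((n : ℝ) - f) ^ 2 + 2 * ((n : ℝ) - r) ^ 2 := by positivity
  have h1 : (((n : ℝ) - f) * γ - 2 * ((f : ℝ) + r) * μ) ^ 2 ≤
      (((n : ℝ) - f) ^ 2 + 4 * ((f : ℝ) + r) ^ 2) * μ ^ 2 := by
    have hγ2 : γ ^ 2 ≤ μ ^ 2 := by nlinarith
    have h4 : 0 ≤ 4 * ((n:ℝ) - f) * ((f:ℝ) + r) * γ * μ := by positivity
    nlinarith [mul_le_mul_of_nonneg_left hγ2 (sq_nonneg ((n:ℝ) - f)), h4]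
  have hEeq : 2 * ((n : ℝ) + s * f + (s - 1) * r) * ((n : ℝ) - s * f - (1 + s) * r) =
      2 * ((n : ℝ) - r) ^ 2 - 4 * ((f : ℝ) + r) ^ 2 := by
    linear_combination (-2 * ((f:ℝ) + r) ^ 2) * hs2
  have hpos : 0 < 2 * ((n : ℝ) + s * f + (s - 1) * r) * ((n : ℝ) - s * f - (1 + s) * r) := by
    have hsf : s * f ≤ 1.5 * f := mul_le_mul_of_nonneg_right hs15 hf0
    have hsr : s * r ≤ 1.5 * r := mul_le_mul_of_nonneg_right hs15 hr0
    have hsf0 : 0 ≤ s * f := mul_nonneg (by linarith) hf0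
    have hsr0 : 0 ≤ (s - 1) * r := mul_nonneg (by linarith) hr0
    have h1 : 0 < (n : ℝ) + s * f + (s - 1) * r := by linarith
    have h2 : 0 < (n : ℝ) - s * f - (1 + s) * r := by linarith
    positivity
  refine ⟨h1, ?_, by positivity⟩
  have hDμ : (0:ℝ) < ((n : ℝ) - f) ^ 2 * μ ^ 2 + 2 * ((n : ℝ) - r) ^ 2 * μ ^ 2 := by positivity
  have hdiv : (((n : ℝ) - f) * γ - 2 * ((f : ℝ) + r) * μ) ^ 2 /
      (((n : ℝ) - f) ^ 2 * μ ^ 2 + 2 * ((n : ℝ) - r) ^ 2 * μ ^ 2) ≤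
      (((n : ℝ) - f) ^ 2 + 4 * ((f : ℝ) + r) ^ 2) /
      (((n : ℝ) - f) ^ 2 + 2 * ((n : ℝ) - r) ^ 2) := by
    rw [div_le_div_iff₀ hDμ hD]
    nlinarith [h1, hD, sq_nonneg μ]
  have hfin : 1 - (((n : ℝ) - f) ^ 2 + 4 * ((f : ℝ) + r) ^ 2) /
      (((n : ℝ) - f) ^ 2 + 2 * ((n : ℝ) - r) ^ 2) =
      2 * ((n : ℝ) + s * f + (s - 1) * r) * ((n : ℝ) - s * f - (1 + s) * r) /
      (((n : ℝ) - f) ^ 2 + 2 * ((n : ℝ) - r) ^ 2) := by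
    rw [hEeq]; field_simp; ring
  linarith [hdiv, hfin.ge, hfin.le]
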